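/- Let (x_i, f_i) be a Schauder frame of a Banach space X. Then the following are equivalent: (a) every normalized block sequence of (x_i) is weakly null; (b) the frame is locally shrinking, and every sequence (u_n) in the closed unit ball of X with lim_{n→∞} f_m(u_n) = 0 for all m ∈ ℕ is weakly null. -/

import Mathlib

open Filter Topology

/-- `sup { |g z| : z ∈ span (x i : i ≥ n), ‖z‖ ≤ 1 }`. -/
noncomputable def tailSupX {X : Type*} [NormedAddCommGroup X] [NormedSpace ℝ X]
    (x : ℕ → X) (g : X →L[ℝ] ℝ) (n : ℕ) : ℝ :=
  sSup ((fun z : X => |g z|) ''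
    {z | z ∈ Submodule.span ℝ (x '' {i | n ≤ i}) ∧ ‖z‖ ≤ 1})

/-- `u` is a normalized block sequence of `(x i)`: `u k = ∑_{i=m k}^{n k} a i • x i` with
`m k ≤ n k < m (k+1)` and `‖u k‖ = 1`. -/
def IsNormalizedBlock {X : Type*} [NormedAddCommGroup X] [NormedSpace ℝ X]
    (x : ℕ → X) (u : ℕ → X) : Prop :=
  ∃ (m n : ℕ → ℕ) (a : ℕ → ℝ), (∀ k, m k ≤ n k) ∧ (∀ k, n k < m (k + 1)) ∧
    (∀ k, u k = ∑ i ∈ Finset.Icc (m k) (n k), a i • x i) ∧ ∀ k, ‖u k‖ = 1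

/-- `u` is weakly null. -/
def WeaklyNull {X : Type*} [NormedAddCommGroup X] [NormedSpace ℝ X] (u : ℕ → X) : Prop :=
  ∀ g : X →L[ℝ] ℝ, Tendsto (fun k => g (u k)) atTop (𝓝 0)

section Helpers
variable {X : Type*} [NormedAddCommGroup X] [NormedSpace ℝ X]

lemma tailSupX_bddAbove (x : ℕ → X) (g : X →L[ℝ] ℝ) (n : ℕ) :
    BddAbove ((fun z : X => |g z|) ''
      {z | z ∈ Submodule.span ℝ (x '' {i | n ≤ i}) ∧ ‖z‖ ≤ 1}) := by
  refine ⟨‖g‖, ?_⟩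
  rintro _ ⟨z, ⟨hz, hz1⟩, rfl⟩
  calc |g z| = ‖g z‖ := (Real.norm_eq_abs _).symm
    _ ≤ ‖g‖ * ‖z‖ := g.le_opNorm z
    _ ≤ ‖g‖ * 1 := by gcongr
    _ = ‖g‖ := mul_one _

lemma tailSupX_set_nonempty (x : ℕ → X) (g : X →L[ℝ] ℝ) (n : ℕ) :
    ((fun z : X => |g z|) ''
      {z | z ∈ Submodule.span ℝ (x '' {i | n ≤ i}) ∧ ‖z‖ ≤ 1}).Nonempty :=
  ⟨|g 0|, ⟨0, ⟨Submodule.zero_mem _, by simp⟩, rfl⟩⟩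

lemma abs_le_tailSupX {x : ℕ → X} {g : X →L[ℝ] ℝ} {n : ℕ} {z : X}
    (hz : z ∈ Submodule.span ℝ (x '' {i | n ≤ i})) (hz1 : ‖z‖ ≤ 1) :
    |g z| ≤ tailSupX x g n :=
  le_csSup (tailSupX_bddAbove x g n) ⟨z, ⟨hz, hz1⟩, rfl⟩

lemma tailSupX_nonneg (x : ℕ → X) (g : X →L[ℝ] ℝ) (n : ℕ) : 0 ≤ tailSupX x g n := by
  have := abs_le_tailSupX (x := x) (g := g) (n := n) (z := 0) (Submodule.zero_mem _) (by simp)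
  simpa using this

lemma tailSupX_antitone (x : ℕ → X) (g : X →L[ℝ] ℝ) : Antitone (tailSupX x g) := by
  intro a b hab
  refine csSup_le_csSup (tailSupX_bddAbove x g a) (tailSupX_set_nonempty x g b) ?_
  rintro _ ⟨z, ⟨hz, hz1⟩, rfl⟩
  refine ⟨z, ⟨Submodule.span_mono (Set.image_mono ?_) hz, hz1⟩, rfl⟩
  intro i hi
  exact le_trans hab hi

lemma isNormalizedBlock_of (x u : ℕ → X) (m n : ℕ → ℕ) (b : ℕ → ℕ → ℝ)
    (h1 : ∀ k, m k ≤ n k) (h2 : ∀ k, n k < m (k + 1))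
    (h3 : ∀ k, u k = ∑ i ∈ Finset.Icc (m k) (n k), b k i • x i)
    (h4 : ∀ k, ‖u k‖ = 1) : IsNormalizedBlock x u := by
  have hmono : StrictMono m := strictMono_nat_of_lt_succ fun k => lt_of_le_of_lt (h1 k) (h2 k)
  have huniq : ∀ k k' i, m k ≤ i → i ≤ n k → m k' ≤ i → i ≤ n k' → k = k' := by
    intro k k' i a1 a2 a3 a4
    rcases lt_trichotomy k k' with h | h | h
    · have e1 : m (k + 1) ≤ m k' := hmono.monotone (Nat.succ_le_of_lt h)
      have e2 := h2 k
      omega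
    · exact h
    · have e1 : m (k' + 1) ≤ m k := hmono.monotone (Nat.succ_le_of_lt h)
      have e2 := h2 k'
      omega
  refine ⟨m, n, fun i => open Classical in
    if h : ∃ k, m k ≤ i ∧ i ≤ n k then b h.choose i else 0, h1, h2, ?_, h4⟩
  intro k
  rw [h3 k]
  refine Finset.sum_congr rfl fun i hi => ?_
  simp only [Finset.mem_Icc] at hi
  have hex : ∃ k', m k' ≤ i ∧ i ≤ n k' := ⟨k, hi.1, hi.2⟩
  beta_reduce
  rw [dif_pos hex, huniq hex.choose k i hex.choose_spec.1 hex.choose_spec.2 hi.1 hi.2]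

lemma not_tendsto_zero_iff {v : ℕ → ℝ} (h : ¬ Tendsto v atTop (𝓝 0)) :
    ∃ ε > 0, ∃ᶠ n in atTop, ε ≤ |v n| := by
  rw [NormedAddCommGroup.tendsto_nhds_zero] at h
  push_neg at h
  obtain ⟨ε, hε, h⟩ := h
  refine ⟨ε, hε, ?_⟩
  exact h.mono fun n hn => by simpa [Real.norm_eq_abs] using hn

end Helpers

/-- Let `(x i, f i)` be a Schauder frame of a Banach space `X`. Then
every normalized block sequence of `(x i)` is weakly null iff the frame is locally
shrinking and every sequence `(u n)` in the unit ball with `f m (u n) → 0` for all `m`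
is weakly null. -/
theorem schauderFrame_block_weaklyNull_iff
    {X : Type*} [NormedAddCommGroup X] [NormedSpace ℝ X] [CompleteSpace X]
    (x : ℕ → X) (f : ℕ → X →L[ℝ] ℝ)
    (hx : ∀ i, x i ≠ 0) (hf : ∀ i, f i ≠ 0)
    (hframe : ∀ v : X,
      Tendsto (fun n => ∑ i ∈ Finset.range n, f i v • x i) atTop (𝓝 v)) :
    (∀ u : ℕ → X, IsNormalizedBlock x u → WeaklyNull u) ↔
      ((∀ m : ℕ, Tendsto (tailSupX x (f m)) atTop (𝓝 0)) ∧
        ∀ u : ℕ → X, (∀ n, ‖u n‖ ≤ 1) →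
          (∀ m : ℕ, Tendsto (fun n => f m (u n)) atTop (𝓝 0)) → WeaklyNull u) := by
  constructor
  · intro hblock
    constructor
    · -- locally shrinking
      intro m
      by_contra hcon
      obtain ⟨ε, hε, hfreq⟩ := not_tendsto_zero_iff hcon
      have hall : ∀ N, ε ≤ tailSupX x (f m) N := by
        intro N
        obtain ⟨N', h1, h2⟩ := (hfreq.and_eventually (eventually_ge_atTop N)).exists
        have := tailSupX_antitone x (f m) h2
        have hnn := tailSupX_nonneg x (f m) N'
        rw [abs_of_nonneg hnn] at h1
        linarith
      have hex : ∀ N, ∃ z : X, z ∈ Submodule.span ℝ (x '' {i | N ≤ i}) ∧ ‖z‖ ≤ 1 ∧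
          ε / 2 < |f m z| := by
        intro N
        have hlt : ε / 2 < tailSupX x (f m) N := lt_of_lt_of_le (by linarith) (hall N)
        obtain ⟨r, ⟨z, ⟨hz, hz1⟩, rfl⟩, hr⟩ :=
          exists_lt_of_lt_csSup (tailSupX_set_nonempty x (f m) N) hlt
        exact ⟨z, hz, hz1, hr⟩
      choose z hz hz1 hz2 using hex
      have hzsupp : ∀ N, ∃ l : ℕ →₀ ℝ, (↑l.support ⊆ {i | N ≤ i}) ∧
          Finsupp.linearCombination ℝ x l = z N := by
        intro N
        obtain ⟨l, hl, hl2⟩ := (Finsupp.mem_span_image_iff_linearCombination ℝ).1 (hz N)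
        exact ⟨l, (Finsupp.mem_supported ℝ l).1 hl, hl2⟩
      choose l hl1 hl2 using hzsupp
      set E : ℕ → ℕ := fun N => max N ((l N).support.sup id) with hE
      have hzsum : ∀ N, z N = ∑ i ∈ Finset.Icc N (E N), l N i • x i := by
        intro N
        rw [← hl2 N, Finsupp.linearCombination_apply, Finsupp.sum]
        refine Finset.sum_subset ?_ ?_
        · intro i hi
          rw [Finset.mem_Icc]
          refine ⟨hl1 N hi, le_trans (Finset.le_sup (f := id) hi) (le_max_right _ _)⟩
        · intro i _ hi
          rw [Finsupp.notMem_support_iff.1 hi, zero_smul]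
      set Ns : ℕ → ℕ := fun j => Nat.rec 0 (fun _ N => E N + 1) j with hNs
      have hNsS : ∀ j, Ns (j + 1) = E (Ns j) + 1 := fun j => rfl
      have hzne : ∀ N, 0 < ‖z N‖ := by
        intro N
        rcases (norm_nonneg (z N)).lt_or_eq with h | h
        · exact h
        · exfalso
          have h0 : z N = 0 := by rwa [eq_comm, norm_eq_zero] at h
          have := hz2 N
          rw [h0] at this
          simp at this
          linarith
      set w : ℕ → X := fun j => ‖z (Ns j)‖⁻¹ • z (Ns j) with hw
      have hwblock : IsNormalizedBlock x w := by
        refine isNormalizedBlock_of x w Ns (fun j => E (Ns j))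
          (fun j i => ‖z (Ns j)‖⁻¹ * l (Ns j) i)
          (fun j => le_max_left _ _) (fun j => by beta_reduce; rw [hNsS]; omega) ?_ ?_
        · intro j
          simp only [hw]
          rw [hzsum (Ns j), Finset.smul_sum]
          refine Finset.sum_congr rfl fun i _ => ?_
          rw [smul_smul]
        · intro j
          simp only [hw]
          rw [norm_smul, norm_inv, norm_norm, inv_mul_cancel₀ (ne_of_gt (hzne _))]
      have htend := hblock w hwblock (f m)
      have hlow : ∀ j, ε / 2 < |f m (w j)| := by
        intro j
        have hpos := hzne (Ns j)
        simp only [hw, map_smul, smul_eq_mul, abs_mul, abs_inv, abs_norm]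
        rw [inv_mul_eq_div, lt_div_iff₀ hpos]
        have h1 := hz2 (Ns j)
        have h2 := hz1 (Ns j)
        nlinarith
      obtain ⟨j, hj⟩ := (NormedAddCommGroup.tendsto_nhds_zero.1 htend (ε / 2)
        (by linarith)).exists
      rw [Real.norm_eq_abs] at hj
      exact absurd (hlow j) (not_lt.2 (le_of_lt hj))
    · -- coordinate-null unit-ball sequences are weakly null
      intro u hu hfu g
      by_contra hcon
      obtain ⟨δ, hδ, hfreq⟩ := not_tendsto_zero_iff hcon
      have hgδ : δ ≤ ‖g‖ := by
        obtain ⟨n0, hn0⟩ := hfreq.exists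
        calc δ ≤ |g (u n0)| := hn0
          _ = ‖g (u n0)‖ := (Real.norm_eq_abs _).symm
          _ ≤ ‖g‖ * ‖u n0‖ := g.le_opNorm _
          _ ≤ ‖g‖ * 1 := by gcongr; exact hu n0
          _ = ‖g‖ := mul_one _
      have hgpos : (0 : ℝ) < ‖g‖ + 1 := by positivity
      set c : ℝ := δ / (4 * (‖g‖ + 1)) with hc
      have hcpos : 0 < c := by positivity
      have hcval : c * (4 * (‖g‖ + 1)) = δ := by
        rw [hc]; field_simp
      have hc14 : c ≤ 1 / 4 := by nlinarith
      have hgc : ‖g‖ * c ≤ δ / 4 := by nlinarith [norm_nonneg g]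
      have claim : ∀ N : ℕ, ∃ q : ℕ × ℕ, N ≤ q.2 ∧
          δ / 2 ≤ |g (∑ i ∈ Finset.Icc N q.2, f i (u q.1) • x i)| ∧
          ‖∑ i ∈ Finset.Icc N q.2, f i (u q.1) • x i‖ ≤ 2 := by
        intro N
        have hP : Tendsto (fun n => ∑ i ∈ Finset.range N, f i (u n) • x i) atTop (𝓝 0) := by
          have h0 : ∀ i ∈ Finset.range N,
              Tendsto (fun n => f i (u n) • x i) atTop (𝓝 0) := by
            intro i _
            simpa using (hfu i).smul_const (x i)
          simpa using tendsto_finset_sum (Finset.range N) h0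
        have hev : ∀ᶠ n in atTop, ‖∑ i ∈ Finset.range N, f i (u n) • x i‖ < c := by
          rw [tendsto_zero_iff_norm_tendsto_zero] at hP
          exact hP.eventually (gt_mem_nhds hcpos)
        obtain ⟨n0, hn1, hn2⟩ := (hfreq.and_eventually hev).exists
        have hM : ∀ᶠ M in atTop,
            ‖(∑ i ∈ Finset.range M, f i (u n0) • x i) - u n0‖ < c ∧ N + 1 ≤ M := by
          refine Eventually.and ?_ (eventually_ge_atTop _)
          have := hframe (u n0)
          rw [Metric.tendsto_atTop] at this
          obtain ⟨M0, hM0⟩ := this c hcpos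
          exact eventually_atTop.2 ⟨M0, fun M hMM => by
            simpa [dist_eq_norm] using hM0 M hMM⟩
        obtain ⟨M', hM1, hM2⟩ := hM.exists
        refine ⟨(n0, M' - 1), by omega, ?_, ?_⟩
        all_goals
          have hIcc : Finset.Icc N (M' - 1) = Finset.Ico N M' := by
            rw [← Finset.Ico_add_one_right_eq_Icc]
            congr 1
            omega
        all_goals
          have hsum : (∑ i ∈ Finset.Icc N (M' - 1), f i (u n0) • x i)
              = (∑ i ∈ Finset.range M', f i (u n0) • x i)
                - ∑ i ∈ Finset.range N, f i (u n0) • x i := by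
            rw [hIcc, Finset.range_eq_Ico, eq_sub_iff_add_eq, add_comm]
            rw [Finset.range_eq_Ico]
            exact Finset.sum_Ico_consecutive _ (Nat.zero_le N) (by omega : N ≤ M')
        all_goals
          set A := ∑ i ∈ Finset.range N, f i (u n0) • x i with hA
          set B := ∑ i ∈ Finset.range M', f i (u n0) • x i with hB
        · -- lower bound on |g v|
          have hgA : |g A| ≤ ‖g‖ * c := by
            calc |g A| = ‖g A‖ := (Real.norm_eq_abs _).symm
              _ ≤ ‖g‖ * ‖A‖ := g.le_opNorm _
              _ ≤ ‖g‖ * c := by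
                  exact mul_le_mul_of_nonneg_left (le_of_lt hn2) (norm_nonneg g)
          have hgBu : |g (B - u n0)| ≤ ‖g‖ * c := by
            calc |g (B - u n0)| = ‖g (B - u n0)‖ := (Real.norm_eq_abs _).symm
              _ ≤ ‖g‖ * ‖B - u n0‖ := g.le_opNorm _
              _ ≤ ‖g‖ * c := mul_le_mul_of_nonneg_left (le_of_lt hM1) (norm_nonneg g)
          have key : |g (u n0)| ≤ |g (B - A)| + |g (B - u n0)| + |g A| := by
            have hids : g (u n0) = (g (B - A) - g (B - u n0)) + g A := by
              simp only [map_sub]; ring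
            rw [hids]
            calc |(g (B - A) - g (B - u n0)) + g A|
                ≤ |g (B - A) - g (B - u n0)| + |g A| := abs_add_le _ _
              _ ≤ |g (B - A)| + |g (B - u n0)| + |g A| := by
                  gcongr
                  exact abs_sub _ _
          rw [hsum]
          linarith [hn1, hgc]
        · -- norm bound
          rw [hsum]
          have hBA : B - A = (B - u n0) + u n0 - A := by abel
          have h1 : ‖B - A‖ ≤ ‖B - u n0‖ + ‖u n0‖ + ‖A‖ := by
            calc ‖B - A‖ = ‖(B - u n0) + u n0 - A‖ := by rw [hBA]
              _ ≤ ‖(B - u n0) + u n0‖ + ‖A‖ := norm_sub_le _ _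
              _ ≤ ‖B - u n0‖ + ‖u n0‖ + ‖A‖ :=
                  add_le_add_left (norm_add_le _ _) _
          linarith [le_of_lt hM1, hu n0, le_of_lt hn2, hc14]
      choose q hq1 hq2 hq3 using claim
      set Ns : ℕ → ℕ := fun j => Nat.rec 0 (fun _ N => (q N).2 + 1) j with hNs
      have hNsS : ∀ j, Ns (j + 1) = (q (Ns j)).2 + 1 := fun j => rfl
      set v : ℕ → X := fun j =>
        ∑ i ∈ Finset.Icc (Ns j) ((q (Ns j)).2), f i (u ((q (Ns j)).1)) • x i with hv
      have hvlow : ∀ j, δ / 2 ≤ |g (v j)| := fun j => hq2 (Ns j)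
      have hvnorm : ∀ j, ‖v j‖ ≤ 2 := fun j => hq3 (Ns j)
      have hvpos : ∀ j, 0 < ‖v j‖ := by
        intro j
        rcases (norm_nonneg (v j)).lt_or_eq with h | h
        · exact h
        · exfalso
          have h0 : v j = 0 := by rwa [eq_comm, norm_eq_zero] at h
          have := hvlow j
          rw [h0] at this
          simp at this
          linarith
      set w : ℕ → X := fun j => ‖v j‖⁻¹ • v j with hw
      have hwblock : IsNormalizedBlock x w := by
        refine isNormalizedBlock_of x w Ns (fun j => (q (Ns j)).2)
          (fun j i => ‖v j‖⁻¹ * f i (u ((q (Ns j)).1)))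
          (fun j => hq1 _) (fun j => by beta_reduce; rw [hNsS]; omega) ?_ ?_
        · intro j
          simp only [hw, hv]
          rw [Finset.smul_sum]
          refine Finset.sum_congr rfl fun i _ => ?_
          rw [smul_smul]
        · intro j
          simp only [hw]
          rw [norm_smul, norm_inv, norm_norm, inv_mul_cancel₀ (ne_of_gt (hvpos _))]
      have htend := hblock w hwblock g
      have hlow : ∀ j, δ / 4 ≤ |g (w j)| := by
        intro j
        simp only [hw, map_smul, smul_eq_mul, abs_mul, abs_inv, abs_norm]
        rw [inv_mul_eq_div, le_div_iff₀ (hvpos j)]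
        nlinarith [hvlow j, hvnorm j]
      obtain ⟨j, hj⟩ := (NormedAddCommGroup.tendsto_nhds_zero.1 htend (δ / 4)
        (by linarith)).exists
      rw [Real.norm_eq_abs] at hj
      exact absurd (hlow j) (not_le.2 hj)
  · rintro ⟨hshr, hws⟩ u ⟨m, n, a, h1, h2, h3, h4⟩
    have hmono : StrictMono m := strictMono_nat_of_lt_succ fun k => lt_of_le_of_lt (h1 k) (h2 k)
    have hmtop : Tendsto m atTop atTop := hmono.tendsto_atTop
    refine hws u (fun k => le_of_eq (h4 k)) ?_
    intro M
    have hspan : ∀ k, u k ∈ Submodule.span ℝ (x '' {i | m k ≤ i}) := by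
      intro k
      rw [h3 k]
      refine Submodule.sum_mem _ fun i hi => Submodule.smul_mem _ _ (Submodule.subset_span ?_)
      exact ⟨i, (Finset.mem_Icc.1 hi).1, rfl⟩
    have hb : ∀ k, |f M (u k)| ≤ tailSupX x (f M) (m k) := fun k =>
      abs_le_tailSupX (hspan k) (le_of_eq (h4 k))
    exact squeeze_zero_norm (by simpa [Real.norm_eq_abs] using hb) ((hshr M).comp hmtop)
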